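/- Every well-layered chart (X, δ) admits a solution, and this solution is unique up to equivalence: for any two solutions φ, ψ : X → StExp of (X, δ), SL* ⊢ φ(x) = ψ(x) for all x ∈ X. -/

import Mathlib

/-- A chart over action alphabet `Act` with state space `X`: each state is assigned a
finite set of transitions, either `(a, none)` (i.e. `x →a ✓`) or `(a, some y)` (i.e. `x →a y`). -/
structure Chart (Act X : Type) where
  tr : X → Finset (Act × Option X)

/-- `x →a ✓` in the chart `C`. -/
def Chart.Halts {Act X : Type} (C : Chart Act X) (x : X) : Prop :=
  ∃ a : Act, (a, (none : Option X)) ∈ C.tr x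

/-- `x → y` (for some action) in the chart `C`. -/
def Chart.StepRel {Act X : Type} (C : Chart Act X) (x y : X) : Prop :=
  ∃ a : Act, (a, some y) ∈ C.tr x

/-- `R` is a bisimulation between the charts `C` and `D`. -/
def IsBisim {Act X Y : Type} (C : Chart Act X) (D : Chart Act Y) (R : X → Y → Prop) : Prop :=
  ∀ x y, R x y → ∀ a : Act,
    (((a, (none : Option X)) ∈ C.tr x) ↔ ((a, (none : Option Y)) ∈ D.tr y)) ∧
    (∀ x', (a, some x') ∈ C.tr x → ∃ y', (a, some y') ∈ D.tr y ∧ R x' y') ∧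
    (∀ y', (a, some y') ∈ D.tr y → ∃ x', (a, some x') ∈ C.tr x ∧ R x' y')

/-- States `x` of `C` and `y` of `D` are bisimilar. -/
def Bisimilar {Act X Y : Type} (C : Chart Act X) (D : Chart Act Y) (x : X) (y : Y) : Prop :=
  ∃ R, IsBisim C D R ∧ R x y

/-- A chart homomorphism is a function whose graph is a bisimulation. -/
def IsChartHom {Act X Y : Type} (C : Chart Act X) (D : Chart Act Y) (h : X → Y) : Prop :=
  IsBisim C D (fun x y => h x = y)

/-- 1-free star expressions over the alphabet `Act`. -/
inductive StExp (Act : Type) : Type where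
  | zero : StExp Act
  | act : Act → StExp Act
  | add : StExp Act → StExp Act → StExp Act
  | mul : StExp Act → StExp Act → StExp Act
  | star : StExp Act → StExp Act → StExp Act
deriving DecidableEq

/-- Continuation after a transition of the left operand: `✓` continues as `s`,
and a state `t` continues as `t·s`. -/
def StExp.seqAfter {Act : Type} (s : StExp Act) : Option (StExp Act) → StExp Act
  | none => s
  | some t => t.mul s

/-- The transition function of the syntactic chart, following Antimirov-style rules. -/
def StExp.tr {Act : Type} [DecidableEq Act] : StExp Act → Finset (Act × Option (StExp Act))
  | .zero => ∅
  | .act a => {(a, none)}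
  | .add r s => r.tr ∪ s.tr
  | .mul r s => r.tr.image (fun p => (p.1, some (StExp.seqAfter s p.2)))
  | .star r s =>
      (r.tr.image (fun p => (p.1, some (StExp.seqAfter (StExp.star r s) p.2)))) ∪ s.tr

/-- The syntactic chart `(StExp, δ)`. -/
def synChart (Act : Type) [DecidableEq Act] : Chart Act (StExp Act) := ⟨StExp.tr⟩

/-- Derivability `SL* ⊢ r = s` from Grabmayer and Fokkink's axioms together with
the laws of equational logic. -/
inductive SLEq {Act : Type} : StExp Act → StExp Act → Prop where
  | add_comm (x y : StExp Act) : SLEq (x.add y) (y.add x)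
  | add_assoc (x y z : StExp Act) : SLEq ((x.add y).add z) (x.add (y.add z))
  | add_idem (x : StExp Act) : SLEq (x.add x) x
  | add_zero (x : StExp Act) : SLEq (x.add .zero) x
  | right_distrib (x y z : StExp Act) : SLEq ((x.add y).mul z) ((x.mul z).add (y.mul z))
  | mul_assoc (x y z : StExp Act) : SLEq ((x.mul y).mul z) (x.mul (y.mul z))
  | zero_mul (x : StExp Act) : SLEq (StExp.zero.mul x) .zero
  | star_unfold (x y : StExp Act) : SLEq (x.star y) ((x.mul (x.star y)).add y)
  | fixpoint {x y z : StExp Act} : SLEq x ((y.mul x).add z) → SLEq x (y.star z)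
  | refl (x : StExp Act) : SLEq x x
  | symm {x y : StExp Act} : SLEq x y → SLEq y x
  | trans {x y z : StExp Act} : SLEq x y → SLEq y z → SLEq x z
  | add_congr {x x' y y' : StExp Act} : SLEq x x' → SLEq y y' → SLEq (x.add y) (x'.add y')
  | mul_congr {x x' y y' : StExp Act} : SLEq x x' → SLEq y y' → SLEq (x.mul y) (x'.mul y')
  | star_congr {x x' y y' : StExp Act} : SLEq x x' → SLEq y y' → SLEq (x.star y) (x'.star y')

/-- The expression associated to a single transition under a map `φ`:
`(a, ✓)` yields `a` and `(a, some x)` yields `a·φ(x)`. -/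
def pairExp {Act X : Type} (φ : X → StExp Act) : Act × Option X → StExp Act
  | (a, none) => .act a
  | (a, some x) => (StExp.act a).mul (φ x)

/-- The sum `e1 + ⋯ + en` of a list of expressions (the empty sum is `0`). -/
def listSum {Act : Type} : List (StExp Act) → StExp Act :=
  fun l => l.foldr StExp.add StExp.zero

/-- `φ` is a solution to the chart `C`: for each state `x` with
`δ(x) = {(a1,x1),…,(an,xn),(b1,✓),…,(bm,✓)}` we have
`SL* ⊢ φ(x) = a1·φ(x1) + ⋯ + an·φ(xn) + b1 + ⋯ + bm`. -/
def IsSolution {Act X : Type} (C : Chart Act X) (φ : X → StExp Act) : Prop :=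
  ∀ x : X, SLEq (φ x) (listSum (((C.tr x).toList).map (pairExp φ)))

/-- The body transitions determined by an entry/body labelling whose loop-entry
relation is `E`: the remaining transitions. -/
def Chart.Body {Act X : Type} (C : Chart Act X) (E : X → X → Prop) (x y : X) : Prop :=
  C.StepRel x y ∧ ¬ E x y

/-- `x ↷ y`: there is a chain `x →e x1 →b ⋯ →b xn = y` with `x ∉ {x1, …, xn}`. -/
def Chart.LoopsTo {Act X : Type} (C : Chart Act X) (E : X → X → Prop) (x y : X) : Prop :=
  ∃ x1, E x x1 ∧ x1 ≠ x ∧ Relation.ReflTransGen (fun u v => C.Body E u v ∧ v ≠ x) x1 y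

/-- `E` (together with the complementary body transitions) is a well-layered
entry/body labelling of the chart `C`. -/
def WellLayeredLabelling {Act X : Type} (C : Chart Act X) (E : X → X → Prop) : Prop :=
  (∀ x y, E x y → C.StepRel x y) ∧
  (∀ x, ¬ Relation.TransGen (C.Body E) x x) ∧
  (∀ x y, E x y → Relation.TransGen (C.Body E) y x) ∧
  (∀ x, ¬ Relation.TransGen (C.LoopsTo E) x x) ∧
  (∀ x y, C.LoopsTo E x y → ¬ C.Halts y)

/-- The set of states reachable (by `→*`) from the set `U`. -/
def Chart.Reach {Act X : Type} (C : Chart Act X) (U : Set X) : Set X :=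
  {y | ∃ u ∈ U, Relation.ReflTransGen C.StepRel u y}

/-- A chart is locally finite if every generated subchart `⟨x⟩` is finite. -/
def Chart.LocallyFinite {Act X : Type} (C : Chart Act X) : Prop :=
  ∀ x : X, (C.Reach {x}).Finite

/-- A chart is well-layered if it admits a well-layered entry/body labelling
and is locally finite. -/
def IsWellLayered {Act X : Type} (C : Chart Act X) : Prop :=
  (∃ E : X → X → Prop, WellLayeredLabelling C E) ∧ C.LocallyFinite


namespace SLEq
variable {Act : Type}

infix:50 " ≡ " => SLEq

instance : Trans (@SLEq Act) SLEq SLEq := ⟨SLEq.trans⟩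

theorem zero_add (x : StExp Act) : StExp.zero.add x ≡ x :=
  .trans (.add_comm _ _) (.add_zero x)

theorem star_mul (w u v : StExp Act) :
    (w.star u).mul v ≡ w.star (u.mul v) := by
  apply SLEq.fixpoint
  calc (w.star u).mul v
      ≡ ((w.mul (w.star u)).add u).mul v := .mul_congr (.star_unfold w u) (.refl v)
    _ ≡ ((w.mul (w.star u)).mul v).add (u.mul v) := .right_distrib _ _ _
    _ ≡ (w.mul ((w.star u).mul v)).add (u.mul v) :=
        .add_congr (.mul_assoc _ _ _) (.refl _)

end SLEq

namespace SLEq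
variable {Act : Type} {α : Type}

theorem listSum_append (l m : List (StExp Act)) :
    listSum (l ++ m) ≡ (listSum l).add (listSum m) := by
  induction l with
  | nil => exact .symm (zero_add _)
  | cons a l ih =>
      calc listSum (a :: l ++ m) ≡ a.add (listSum (l ++ m)) := .refl _
        _ ≡ a.add ((listSum l).add (listSum m)) := .add_congr (.refl a) ih
        _ ≡ (a.add (listSum l)).add (listSum m) := .symm (.add_assoc _ _ _)

theorem listSum_perm {l m : List (StExp Act)} (h : l.Perm m) :
    listSum l ≡ listSum m := by
  induction h with
  | nil => exact .refl _
  | cons a _ ih => exact .add_congr (.refl a) ih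
  | swap a b l =>
      calc listSum (b :: a :: l) ≡ b.add (a.add (listSum l)) := .refl _
        _ ≡ (b.add a).add (listSum l) := .symm (.add_assoc _ _ _)
        _ ≡ (a.add b).add (listSum l) := .add_congr (.add_comm _ _) (.refl _)
        _ ≡ a.add (b.add (listSum l)) := .add_assoc _ _ _
  | trans _ _ ih1 ih2 => exact ih1.trans ih2

theorem listSum_map_congr {l : List α} {f g : α → StExp Act}
    (h : ∀ p ∈ l, f p ≡ g p) :
    listSum (l.map f) ≡ listSum (l.map g) := by
  induction l with
  | nil => exact .refl _
  | cons a l ih =>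
      exact .add_congr (h a (List.mem_cons_self))
        (ih fun p hp => h p (List.mem_cons_of_mem a hp))

theorem listSum_mul (l : List (StExp Act)) (c : StExp Act) :
    listSum (l.map (fun e => e.mul c)) ≡ (listSum l).mul c := by
  induction l with
  | nil => exact .symm (.zero_mul c)
  | cons a l ih =>
      rw [List.map_cons]
      show (a.mul c).add (listSum (l.map fun e => e.mul c)) ≡ (a.add (listSum l)).mul c
      exact (SLEq.add_congr (SLEq.refl _) ih).trans (.symm (.right_distrib _ _ _))

theorem listSum_map_mul (l : List α) (g : α → StExp Act) (c : StExp Act) :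
    listSum (l.map fun p => (g p).mul c) ≡ (listSum (l.map g)).mul c := by
  have : l.map (fun p => (g p).mul c) = (l.map g).map (fun e => e.mul c) := by
    rw [List.map_map]; rfl
  rw [this]; exact listSum_mul _ c

end SLEq

namespace WLSol
open SLEq

attribute [local instance] Classical.propDecidable

variable {Act X : Type} [DecidableEq Act]

/-- entry transitions in a list -/
noncomputable def entOf (E : X → X → Prop) (y : X) : List (Act × Option X) → List (Act × X)
  | [] => []
  | (_, none) :: l => entOf E y l
  | (a, some z) :: l => if E y z then (a, z) :: entOf E y l else entOf E y l

noncomputable def bodOf (E : X → X → Prop) (y : X) : List (Act × Option X) → List (Act × X)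
  | [] => []
  | (_, none) :: l => bodOf E y l
  | (a, some z) :: l => if E y z then bodOf E y l else (a, z) :: bodOf E y l

def halOf : List (Act × Option X) → List Act
  | [] => []
  | (a, none) :: l => a :: halOf l
  | (_, some _) :: l => halOf l

theorem mem_entOf {E : X → X → Prop} {y : X} {l : List (Act × Option X)} {a : Act} {z : X} :
    (a, z) ∈ entOf E y l ↔ (a, some z) ∈ l ∧ E y z := by
  induction l with
  | nil => simp [entOf]
  | cons p l ih =>
      obtain ⟨b, w⟩ := p
      cases w with
      | none => simpa [entOf] using ih
      | some u =>
          by_cases h : E y u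
          · rw [entOf, if_pos h]
            simp only [List.mem_cons, Prod.mk.injEq, Option.some.injEq, ih]
            constructor
            · rintro (⟨rfl, rfl⟩ | ⟨h1, h2⟩)
              · exact ⟨Or.inl ⟨rfl, rfl⟩, h⟩
              · exact ⟨Or.inr h1, h2⟩
            · rintro ⟨(⟨rfl, rfl⟩ | h1), h2⟩
              · exact Or.inl (And.intro rfl rfl)
              · exact Or.inr ⟨h1, h2⟩
          · rw [entOf, if_neg h]
            simp only [List.mem_cons, Prod.mk.injEq, Option.some.injEq, ih]
            constructor
            · rintro ⟨h1, h2⟩; exact ⟨Or.inr h1, h2⟩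
            · rintro ⟨(⟨rfl, rfl⟩ | h1), h2⟩
              · exact absurd h2 h
              · exact ⟨h1, h2⟩

theorem mem_bodOf {E : X → X → Prop} {y : X} {l : List (Act × Option X)} {a : Act} {z : X} :
    (a, z) ∈ bodOf E y l ↔ (a, some z) ∈ l ∧ ¬ E y z := by
  induction l with
  | nil => simp [bodOf]
  | cons p l ih =>
      obtain ⟨b, w⟩ := p
      cases w with
      | none => simpa [bodOf] using ih
      | some u =>
          by_cases h : E y u
          · rw [bodOf, if_pos h]
            simp only [List.mem_cons, Prod.mk.injEq, Option.some.injEq, ih]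
            constructor
            · rintro ⟨h1, h2⟩; exact ⟨Or.inr h1, h2⟩
            · rintro ⟨(⟨rfl, rfl⟩ | h1), h2⟩
              · exact absurd h h2
              · exact ⟨h1, h2⟩
          · rw [bodOf, if_neg h]
            simp only [List.mem_cons, Prod.mk.injEq, Option.some.injEq, ih]
            constructor
            · rintro (⟨rfl, rfl⟩ | ⟨h1, h2⟩)
              · exact ⟨Or.inl ⟨rfl, rfl⟩, h⟩
              · exact ⟨Or.inr h1, h2⟩
            · rintro ⟨(⟨rfl, rfl⟩ | h1), h2⟩
              · exact Or.inl (And.intro rfl rfl)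
              · exact Or.inr ⟨h1, h2⟩

omit [DecidableEq Act] in
theorem mem_halOf {l : List (Act × Option X)} {a : Act} :
    a ∈ halOf l ↔ ((a, none) : Act × Option X) ∈ l := by
  induction l with
  | nil => simp [halOf]
  | cons p l ih =>
      obtain ⟨b, w⟩ := p
      cases w with
      | none => simp [halOf, ih]
      | some u => simp [halOf, ih]

end WLSol

namespace WLSol
open Relation

set_option linter.unusedSectionVars false

variable {Act X : Type} [DecidableEq Act]
variable {C : Chart Act X} {E : X → X → Prop}

noncomputable def lrank (C : Chart Act X) (E : X → X → Prop) (x : X) : ℕ :=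
  {y | TransGen (C.LoopsTo E) x y}.ncard

noncomputable def brank (C : Chart Act X) (E : X → X → Prop) (x : X) : ℕ :=
  {y | TransGen (C.Body E) x y}.ncard

theorem body_step {x y : X} (h : C.Body E x y) : C.StepRel x y := h.1

theorem loops_rtg {x y : X} (h : C.LoopsTo E x y)
    (hW : WellLayeredLabelling C E) : ReflTransGen C.StepRel x y := by
  obtain ⟨x1, hE, _, hchain⟩ := h
  refine ReflTransGen.head (hW.1 _ _ hE) ?_
  exact ReflTransGen.mono (r := fun u v => C.Body E u v ∧ v ≠ x) (p := C.StepRel)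
    (fun u v hv => hv.1.1) _ _ hchain

theorem desc_finite {r : X → X → Prop} (hr : ∀ u v, r u v → ReflTransGen C.StepRel u v)
    (hLF : C.LocallyFinite) (x : X) : {y | TransGen r x y}.Finite := by
  refine (hLF x).subset ?_
  intro y hy
  refine ⟨x, Set.mem_singleton x, ?_⟩
  induction hy with
  | single h => exact hr _ _ h
  | tail _ h ih => exact ih.trans (hr _ _ h)

theorem lrank_lt (hW : WellLayeredLabelling C E) (hLF : C.LocallyFinite)
    {x y : X} (h : C.LoopsTo E x y) : lrank C E y < lrank C E x := by
  have hfin : {z | TransGen (C.LoopsTo E) x z}.Finite :=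
    desc_finite (fun u v hv => loops_rtg hv hW) hLF x
  apply Set.ncard_lt_ncard _ hfin
  constructor
  · intro z hz; exact TransGen.head h hz
  · intro hsub
    exact hW.2.2.2.1 y (hsub (TransGen.single h))

theorem brank_lt (hW : WellLayeredLabelling C E) (hLF : C.LocallyFinite)
    {x y : X} (h : C.Body E x y) : brank C E y < brank C E x := by
  have hfin : {z | TransGen (C.Body E) x z}.Finite :=
    desc_finite (fun u v hv => ReflTransGen.single hv.1) hLF x
  apply Set.ncard_lt_ncard _ hfin
  constructor
  · intro z hz; exact TransGen.head h hz
  · intro hsub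
    exact hW.2.1 y (hsub (TransGen.single h))

theorem loops_of_E (hW : WellLayeredLabelling C E) {x y : X} (h : E x y) :
    C.LoopsTo E x y := by
  refine ⟨y, h, ?_, ReflTransGen.refl⟩
  intro hxy
  subst hxy
  exact hW.2.1 y (hW.2.2.1 _ _ h)

theorem loops_ne (hW : WellLayeredLabelling C E) {x y : X} (h : C.LoopsTo E x y) :
    y ≠ x := by
  obtain ⟨x1, hE, hne, hchain⟩ := h
  clear hE
  induction hchain with
  | refl => exact hne
  | tail _ h ih => exact h.2

theorem loops_extend (hW : WellLayeredLabelling C E) {x y z : X}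
    (h : C.LoopsTo E x y) (hb : C.Body E y z) (hz : z ≠ x) : C.LoopsTo E x z := by
  obtain ⟨x1, hE, hne, hchain⟩ := h
  exact ⟨x1, hE, hne, hchain.tail ⟨hb, hz⟩⟩

end WLSol

namespace WLSol
open Relation

set_option linter.unusedSectionVars false
attribute [local instance] Classical.propDecidable

variable {Act X : Type} [DecidableEq Act]
variable (C : Chart Act X) (E : X → X → Prop)

theorem body_of_mem_bodOf {y : X} {p : Act × X} (hp : p ∈ bodOf E y (C.tr y).toList) :
    C.Body E y p.2 := by
  obtain ⟨a, z⟩ := p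
  obtain ⟨h1, h2⟩ := (mem_bodOf (E := E)).1 hp
  exact ⟨⟨a, Finset.mem_toList.1 h1⟩, h2⟩

noncomputable def tExp (hW : WellLayeredLabelling C E) (hLF : C.LocallyFinite) (x y : X) : StExp Act :=
  (if h : lrank C E y < lrank C E x then
     listSum ((entOf E y (C.tr y).toList).map (fun p => (StExp.act p.1).mul (tExp hW hLF y p.2)))
   else StExp.zero).star
  (listSum ((bodOf E y (C.tr y).toList).attach.map
     (fun q => if q.1.2 = x then StExp.act q.1.1
               else (StExp.act q.1.1).mul (tExp hW hLF x q.1.2))))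
termination_by (lrank C E x, brank C E y)
decreasing_by
  · exact Prod.Lex.left _ _ h
  · exact Prod.Lex.right _ (brank_lt hW hLF (body_of_mem_bodOf C E q.2))

noncomputable def sExp (hW : WellLayeredLabelling C E) (hLF : C.LocallyFinite) (x : X) : StExp Act :=
  (listSum ((entOf E x (C.tr x).toList).map
      (fun p => (StExp.act p.1).mul (tExp C E hW hLF x p.2)))).star
  (listSum (((bodOf E x (C.tr x).toList).attach.map
      (fun q => (StExp.act q.1.1).mul (sExp hW hLF q.1.2)))
     ++ (halOf (C.tr x).toList).map StExp.act))
termination_by brank C E x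
decreasing_by
  exact brank_lt hW hLF (body_of_mem_bodOf C E q.2)

end WLSol

namespace WLSol
open Relation

set_option linter.unusedSectionVars false
attribute [local instance] Classical.propDecidable

variable {Act X : Type} [DecidableEq Act] {α β : Type}
variable (C : Chart Act X) (E : X → X → Prop)
variable (hW : WellLayeredLabelling C E) (hLF : C.LocallyFinite)

theorem attach_map (l : List α) (f : α → β) :
    l.attach.map (fun q => f q.1) = l.map f := List.attach_map_val

theorem tExp_eq (x y : X) (h : lrank C E y < lrank C E x) :
    tExp C E hW hLF x y =
      (listSum ((entOf E y (C.tr y).toList).map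
         (fun p => (StExp.act p.1).mul (tExp C E hW hLF y p.2)))).star
      (listSum ((bodOf E y (C.tr y).toList).map
         (fun p => if p.2 = x then StExp.act p.1
                   else (StExp.act p.1).mul (tExp C E hW hLF x p.2)))) := by
  rw [tExp, dif_pos h]
  exact congrArg _ (congrArg listSum (attach_map _
    (fun p : Act × X => if p.2 = x then StExp.act p.1
      else (StExp.act p.1).mul (tExp C E hW hLF x p.2))))

theorem sExp_eq (x : X) :
    sExp C E hW hLF x =
      (listSum ((entOf E x (C.tr x).toList).map
         (fun p => (StExp.act p.1).mul (tExp C E hW hLF x p.2)))).star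
      (listSum (((bodOf E x (C.tr x).toList).map
         (fun p => (StExp.act p.1).mul (sExp C E hW hLF p.2)))
        ++ (halOf (C.tr x).toList).map StExp.act)) := by
  rw [sExp]
  exact congrArg (fun L => StExp.star _ (listSum (L ++ (halOf (C.tr x).toList).map StExp.act)))
    (attach_map _ (fun p : Act × X => (StExp.act p.1).mul (sExp C E hW hLF p.2)))

end WLSol

namespace WLSol
open Relation SLEq

set_option linter.unusedSectionVars false
attribute [local instance] Classical.propDecidable

variable {Act X : Type} [DecidableEq Act]
variable (C : Chart Act X) (E : X → X → Prop)
variable (hW : WellLayeredLabelling C E) (hLF : C.LocallyFinite)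

theorem permSplit (φ : X → StExp Act) (y : X) (l : List (Act × Option X)) :
    (l.map (pairExp φ)).Perm
      ((entOf E y l).map (fun p => (StExp.act p.1).mul (φ p.2))
        ++ ((bodOf E y l).map (fun p => (StExp.act p.1).mul (φ p.2))
          ++ (halOf l).map StExp.act)) := by
  induction l with
  | nil => exact List.Perm.refl _
  | cons p l ih =>
      obtain ⟨a, w⟩ := p
      cases w with
      | none =>
          rw [List.map_cons, entOf, bodOf, halOf, List.map_cons]
          refine (ih.cons (pairExp φ (a, none))).trans ?_
          refine List.perm_middle.symm.trans ?_
          exact List.Perm.append_left _ List.perm_middle.symm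
      | some z =>
          by_cases h : E y z
          · rw [List.map_cons, entOf, if_pos h, bodOf, if_pos h, halOf, List.map_cons]
            exact ih.cons _
          · rw [List.map_cons, entOf, if_neg h, bodOf, if_neg h, halOf, List.map_cons]
            refine (ih.cons (pairExp φ (a, some z))).trans ?_
            exact List.perm_middle.symm
end WLSol

namespace WLSol
open Relation SLEq

set_option linter.unusedSectionVars false
attribute [local instance] Classical.propDecidable

variable {Act X : Type} [DecidableEq Act]
variable (C : Chart Act X) (E : X → X → Prop)
variable (hW : WellLayeredLabelling C E) (hLF : C.LocallyFinite)

theorem MAIN (φ : X → StExp Act) (x y : X) (h5 : lrank C E y < lrank C E x)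
    (hEq : φ y ≡ listSum
      ((entOf E y (C.tr y).toList).map
          (fun p => (StExp.act p.1).mul ((tExp C E hW hLF y p.2).mul (φ y)))
        ++ (bodOf E y (C.tr y).toList).map (fun p => (StExp.act p.1).mul (φ p.2))))
    (h4 : ∀ p ∈ bodOf E y (C.tr y).toList, p.2 ≠ x →
        φ p.2 ≡ (tExp C E hW hLF x p.2).mul (φ x)) :
    φ y ≡ (tExp C E hW hLF x y).mul (φ x) := by
  set ent := entOf E y (C.tr y).toList with hent
  set bod := bodOf E y (C.tr y).toList with hbod
  set A := listSum (ent.map (fun p => (StExp.act p.1).mul (tExp C E hW hLF y p.2))) with hA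
  set Bc := listSum (bod.map (fun p => if p.2 = x then StExp.act p.1
      else (StExp.act p.1).mul (tExp C E hW hLF x p.2))) with hB
  have step1 : φ y ≡ (A.mul (φ y)).add (Bc.mul (φ x)) := by
    refine hEq.trans ?_
    refine (listSum_append _ _).trans (SLEq.add_congr ?_ ?_)
    · refine SLEq.trans ?_ (listSum_map_mul ent
        (fun p => (StExp.act p.1).mul (tExp C E hW hLF y p.2)) (φ y))
      exact listSum_map_congr (fun p _ => .symm (.mul_assoc _ _ _))
    · refine SLEq.trans ?_ (listSum_map_mul bod
        (fun p => if p.2 = x then StExp.act p.1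
          else (StExp.act p.1).mul (tExp C E hW hLF x p.2)) (φ x))
      refine listSum_map_congr (fun p hp => ?_)
      by_cases hpx : p.2 = x
      · rw [if_pos hpx, hpx]; exact .refl _
      · rw [if_neg hpx]
        exact (SLEq.mul_congr (.refl _) (h4 p hp hpx)).trans (.symm (.mul_assoc _ _ _))
  have step2 : φ y ≡ A.star (Bc.mul (φ x)) := SLEq.fixpoint step1
  have step3 : φ y ≡ (A.star Bc).mul (φ x) := step2.trans (.symm (star_mul _ _ _))
  rw [tExp_eq C E hW hLF x y h5]
  exact step3
end WLSol

namespace WLSol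
open Relation SLEq

set_option linter.unusedSectionVars false
attribute [local instance] Classical.propDecidable

variable {Act X : Type} [DecidableEq Act]
variable (C : Chart Act X) (E : X → X → Prop)
variable (hW : WellLayeredLabelling C E) (hLF : C.LocallyFinite)

theorem halOf_nil {y : X} (h : ¬ C.Halts y) : halOf (C.tr y).toList = ([] : List Act) := by
  rw [List.eq_nil_iff_forall_not_mem]
  intro a ha
  exact h ⟨a, Finset.mem_toList.1 (mem_halOf.1 ha)⟩

/-- Unfolding of `sExp` into the "characteristic sum" shape. -/
theorem sExp_unfold (y : X) :
    sExp C E hW hLF y ≡ listSum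
      ((entOf E y (C.tr y).toList).map
          (fun p => (StExp.act p.1).mul
            ((tExp C E hW hLF y p.2).mul (sExp C E hW hLF y)))
        ++ ((bodOf E y (C.tr y).toList).map
              (fun p => (StExp.act p.1).mul (sExp C E hW hLF p.2))
            ++ (halOf (C.tr y).toList).map StExp.act)) := by
  set ent := entOf E y (C.tr y).toList
  set bod := bodOf E y (C.tr y).toList
  set A := listSum (ent.map (fun p => (StExp.act p.1).mul (tExp C E hW hLF y p.2))) with hA
  set B := listSum ((bod.map (fun p => (StExp.act p.1).mul (sExp C E hW hLF p.2)))
      ++ (halOf (C.tr y).toList).map StExp.act) with hB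
  have e : sExp C E hW hLF y = A.star B := sExp_eq C E hW hLF y
  have h1 : sExp C E hW hLF y ≡ (A.mul (sExp C E hW hLF y)).add B := by
    conv_lhs => rw [e]
    refine (SLEq.star_unfold A B).trans ?_
    rw [← e]; exact .refl _
  refine h1.trans ?_
  refine SLEq.trans ?_ (.symm (listSum_append _ _))
  refine SLEq.add_congr ?_ (.refl _)
  refine SLEq.trans (.symm (listSum_map_mul ent
    (fun p => (StExp.act p.1).mul (tExp C E hW hLF y p.2)) (sExp C E hW hLF y))) ?_
  exact listSum_map_congr (fun p _ => .mul_assoc _ _ _)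

theorem solLoop (x y : X) (h : C.LoopsTo E x y) :
    sExp C E hW hLF y ≡ (tExp C E hW hLF x y).mul (sExp C E hW hLF x) := by
  refine MAIN C E hW hLF _ x y (lrank_lt hW hLF h) ?_ ?_
  · have hhal : halOf (C.tr y).toList = ([] : List Act) :=
      halOf_nil C (hW.2.2.2.2 x y h)
    have := sExp_unfold C E hW hLF y
    rw [hhal] at this
    simpa using this
  · intro p hp hpx
    exact solLoop x p.2 (loops_extend hW h (body_of_mem_bodOf C E hp) hpx)
termination_by brank C E y
decreasing_by exact brank_lt hW hLF (body_of_mem_bodOf C E hp)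

end WLSol

namespace WLSol
open Relation SLEq

set_option linter.unusedSectionVars false
attribute [local instance] Classical.propDecidable

variable {Act X : Type} [DecidableEq Act]
variable (C : Chart Act X) (E : X → X → Prop)
variable (hW : WellLayeredLabelling C E) (hLF : C.LocallyFinite)

theorem loops_of_mem_entOf (hW : WellLayeredLabelling C E) {y : X} {p : Act × X} (hp : p ∈ entOf E y (C.tr y).toList) :
    C.LoopsTo E y p.2 := by
  obtain ⟨a, z⟩ := p
  exact loops_of_E hW ((mem_entOf (E := E)).1 hp).2

theorem sExp_isSolution : IsSolution C (sExp C E hW hLF) := by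
  intro y
  refine (sExp_unfold C E hW hLF y).trans ?_
  refine SLEq.trans ?_ (listSum_perm (permSplit E (sExp C E hW hLF) y (C.tr y).toList).symm)
  refine (listSum_append _ _).trans (SLEq.trans (SLEq.add_congr ?_ (.refl _))
    (.symm (listSum_append _ _)))
  refine listSum_map_congr (fun p hp => ?_)
  exact SLEq.mul_congr (.refl _)
    (.symm (solLoop C E hW hLF y p.2 (loops_of_mem_entOf C E hW hp)))

theorem phiLoop (φ : X → StExp Act) (hφ : IsSolution C φ) (x y : X)
    (h : C.LoopsTo E x y) :
    φ y ≡ (tExp C E hW hLF x y).mul (φ x) := by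
  have hlt : lrank C E y < lrank C E x := lrank_lt hW hLF h
  refine MAIN C E hW hLF φ x y hlt ?_ ?_
  · have hhal : halOf (C.tr y).toList = ([] : List Act) :=
      halOf_nil C (hW.2.2.2.2 x y h)
    refine (hφ y).trans ?_
    refine (listSum_perm (permSplit E φ y (C.tr y).toList)).trans ?_
    rw [hhal]
    simp only [List.map_nil, List.append_nil]
    refine (listSum_append _ _).trans (SLEq.trans (SLEq.add_congr ?_ (.refl _))
      (.symm (listSum_append _ _)))
    refine listSum_map_congr (fun p hp => ?_)
    refine SLEq.mul_congr (.refl _) ?_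
    exact phiLoop φ hφ y p.2 (loops_of_mem_entOf C E hW hp)
  · intro p hp hpx
    exact phiLoop φ hφ x p.2 (loops_extend hW h (body_of_mem_bodOf C E hp) hpx)
termination_by (lrank C E x, brank C E y)
decreasing_by
  all_goals first
    | exact Prod.Lex.left _ _ hlt
    | exact Prod.Lex.right _ (brank_lt hW hLF (body_of_mem_bodOf C E hp))

theorem phi_eq_sExp (φ : X → StExp Act) (hφ : IsSolution C φ) (x : X) :
    φ x ≡ sExp C E hW hLF x := by
  set ent := entOf E x (C.tr x).toList
  set bod := bodOf E x (C.tr x).toList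
  set A := listSum (ent.map (fun p => (StExp.act p.1).mul (tExp C E hW hLF x p.2))) with hA
  set Bφ := listSum ((bod.map (fun p => (StExp.act p.1).mul (φ p.2)))
      ++ (halOf (C.tr x).toList).map StExp.act) with hB
  have step1 : φ x ≡ (A.mul (φ x)).add Bφ := by
    refine (hφ x).trans ?_
    refine (listSum_perm (permSplit E φ x (C.tr x).toList)).trans ?_
    refine (listSum_append _ _).trans (SLEq.add_congr ?_ (.refl _))
    refine SLEq.trans ?_ (listSum_map_mul ent
      (fun p => (StExp.act p.1).mul (tExp C E hW hLF x p.2)) (φ x))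
    refine listSum_map_congr (fun p hp => ?_)
    refine SLEq.trans (SLEq.mul_congr (.refl _)
      (phiLoop C E hW hLF φ hφ x p.2 (loops_of_mem_entOf C E hW hp))) ?_
    exact .symm (.mul_assoc _ _ _)
  have step2 : φ x ≡ A.star Bφ := SLEq.fixpoint step1
  refine step2.trans ?_
  rw [sExp_eq C E hW hLF x]
  refine SLEq.star_congr (.refl _) ?_
  refine (listSum_append _ _).trans (SLEq.trans (SLEq.add_congr ?_ (.refl _))
    (.symm (listSum_append _ _)))
  refine listSum_map_congr (fun p hp => ?_)
  exact SLEq.mul_congr (.refl _) (phi_eq_sExp φ hφ p.2)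
termination_by brank C E x
decreasing_by exact brank_lt hW hLF (body_of_mem_bodOf C E hp)

end WLSol

/-- Every well-layered chart admits a solution, and the solution is unique up to provable
equivalence. -/
theorem well_layered_unique_solution {Act X : Type} [DecidableEq Act]
    (C : Chart Act X) (hC : IsWellLayered C) :
    (∃ φ : X → StExp Act, IsSolution C φ) ∧
      (∀ φ ψ : X → StExp Act, IsSolution C φ → IsSolution C ψ → ∀ x, SLEq (φ x) (ψ x)) := by
  obtain ⟨⟨E, hW⟩, hLF⟩ := hC
  constructor
  · exact ⟨WLSol.sExp C E hW hLF, WLSol.sExp_isSolution C E hW hLF⟩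
  · intro φ ψ hφ hψ x
    exact (WLSol.phi_eq_sExp C E hW hLF φ hφ x).trans
      (WLSol.phi_eq_sExp C E hW hLF ψ hψ x).symm
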